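/- Let q ≥ 1 be an integer and δ ∈ (0,1/2) with δ ≥ 2c₄/q (so that q₀ ≥ 1). Then B₂(q, δ/2) ≤ A(q,δ) ≤ B₁(q, 3δ/2). -/

import Mathlib

open Set Real

/-- Distance from a real number to the nearest integer. -/
noncomputable def nint (y : ℝ) : ℝ := |y - round y|



lemma nint_lipschitz (x y : ℝ) : nint x ≤ nint y + |x - y| := by
  unfold nint
  calc |x - round x| ≤ |x - round y| := round_le x (round y)
    _ = |(y - round y) + (x - y)| := by congr 1; ring
    _ ≤ |y - round y| + |x - y| := abs_add_le _ _

lemma taylor_bound {f f' f'' : ℝ → ℝ} {C : ℝ}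
    (hf : ∀ x ∈ Icc (0:ℝ) 1, HasDerivWithinAt f (f' x) (Icc (0:ℝ) 1) x)
    (hf' : ∀ x ∈ Icc (0:ℝ) 1, HasDerivWithinAt f' (f'' x) (Icc (0:ℝ) 1) x)
    (hC : ∀ x ∈ Icc (0:ℝ) 1, |f'' x| ≤ C)
    {c b : ℝ} (hc : 0 ≤ c) (hcb : c ≤ b) (hb : b ≤ 1) :
    |f b - f c - (b - c) * f' c| ≤ C * (b - c)^2 := by
  have hsub : Icc c b ⊆ Icc (0:ℝ) 1 := Icc_subset_Icc hc hb
  have hcm : c ∈ Icc c b := ⟨le_refl c, hcb⟩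
  have hbm : b ∈ Icc c b := ⟨hcb, le_refl b⟩
  have hC0 : 0 ≤ C := le_trans (abs_nonneg _) (hC c ⟨hc, le_trans hcb hb⟩)
  have step1 : ∀ x ∈ Icc c b, ‖f' x - f' c‖ ≤ C * (b - c) := by
    intro x hx
    have h := Convex.norm_image_sub_le_of_norm_hasDerivWithin_le
      (fun y hy => (hf' y (hsub hy)).mono hsub)
      (fun y hy => hC y (hsub hy)) (convex_Icc c b) hcm hx
    have hxc : ‖x - c‖ ≤ b - c := by
      rw [Real.norm_eq_abs, abs_of_nonneg (by linarith [hx.1])]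
      linarith [hx.2]
    calc ‖f' x - f' c‖ ≤ C * ‖x - c‖ := h
      _ ≤ C * (b - c) := mul_le_mul_of_nonneg_left hxc hC0
  have hg : ∀ x ∈ Icc c b,
      HasDerivWithinAt (fun y => f y - f' c * y) (f' x - f' c) (Icc c b) x := by
    intro x hx
    exact ((hf x (hsub hx)).mono hsub).sub
      (by simpa using (hasDerivWithinAt_id x (Icc c b)).const_mul (f' c))
  have h2 := Convex.norm_image_sub_le_of_norm_hasDerivWithin_le hg step1
    (convex_Icc c b) hcm hbm
  have hn : ‖b - c‖ = b - c := by
    rw [Real.norm_eq_abs, abs_of_nonneg]; linarith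
  calc |f b - f c - (b - c) * f' c|
      = ‖(f b - f' c * b) - (f c - f' c * c)‖ := by rw [Real.norm_eq_abs]; congr 1; ring
    _ ≤ C * (b - c) * ‖b - c‖ := h2
    _ = C * (b - c)^2 := by rw [hn]; ring

lemma floor_int_div (m n : ℤ) (hn : 0 < n) : ⌊(m:ℝ)/(n:ℝ)⌋ = m / n := by
  have hnR : (0:ℝ) < n := by exact_mod_cast hn
  have key := Int.mul_ediv_add_emod m n
  have h1 : 0 ≤ m % n := Int.emod_nonneg m hn.ne'
  have h2 : m % n < n := Int.emod_lt_of_pos m hn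
  refine Int.floor_eq_iff.mpr ⟨?_, ?_⟩
  · rw [le_div_iff₀ hnR]
    have h3 : (n * (m / n) : ℤ) ≤ m := by linarith
    calc ((m / n : ℤ):ℝ) * n = ((n * (m/n) : ℤ) : ℝ) := by push_cast; ring
      _ ≤ m := by exact_mod_cast h3
  · rw [div_lt_iff₀ hnR]
    have h3 : m < n * (m / n) + n := by linarith
    calc (m:ℝ) < ((n * (m/n) + n : ℤ) : ℝ) := by exact_mod_cast h3
      _ = ((m / n : ℤ) + 1) * n := by push_cast; ring

lemma lower_count (q₀ r N : ℤ) (hq₀ : 0 < q₀) (hq₀r : q₀ * r ≤ N)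
    (P : ℤ → ℤ → Prop) (Q : ℤ → Prop)
    (himp : ∀ s a₀ : ℤ, 0 ≤ s → s < r → 0 ≤ a₀ → a₀ < q₀ → P s a₀ → Q (q₀ * s + a₀)) :
    (∑ s ∈ Finset.Ico (0:ℤ) r, {a₀ : ℤ | 0 ≤ a₀ ∧ a₀ < q₀ ∧ P s a₀}.ncard)
      ≤ {a : ℤ | 0 ≤ a ∧ a ≤ N ∧ Q a}.ncard := by
  classical
  have hB : ∀ s : ℤ, {a₀ : ℤ | 0 ≤ a₀ ∧ a₀ < q₀ ∧ P s a₀}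
      = ↑((Finset.Ico (0:ℤ) q₀).filter (fun a₀ => P s a₀)) := by
    intro s; ext a₀
    simp [Finset.mem_filter, Finset.mem_Ico, and_assoc]
  have hA : {a : ℤ | 0 ≤ a ∧ a ≤ N ∧ Q a} = ↑((Finset.Icc (0:ℤ) N).filter Q) := by
    ext a; simp [Finset.mem_filter, Finset.mem_Icc, and_assoc]
  simp only [hB, hA, Set.ncard_coe_finset]
  rw [← Finset.card_sigma]
  apply Finset.card_le_card_of_injOn (fun p => q₀ * p.1 + p.2)
  · rintro ⟨s, a₀⟩ hp
    rw [Finset.mem_coe, Finset.mem_sigma, Finset.mem_Ico, Finset.mem_filter, Finset.mem_Ico] at hp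
    obtain ⟨⟨hs0, hsr⟩, ⟨ha0, haq⟩, hP⟩ := hp
    rw [Finset.mem_coe, Finset.mem_filter, Finset.mem_Icc]
    have h1 : q₀ * (s+1) ≤ q₀ * r := mul_le_mul_of_nonneg_left (by linarith) hq₀.le
    have h2 : q₀ * (s+1) = q₀ * s + q₀ := by ring
    exact ⟨⟨add_nonneg (mul_nonneg hq₀.le hs0) ha0, by linarith⟩,
      himp s a₀ hs0 hsr ha0 haq hP⟩
  · rintro ⟨s, a₀⟩ hp ⟨s', a₀'⟩ hp' h
    simp only [Finset.coe_sigma, Set.mem_sigma_iff, Finset.mem_coe, Finset.mem_Ico,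
      Finset.mem_filter] at hp hp'
    simp only at h
    have e1 : a₀ = a₀' := by
      have m1 : (q₀ * s + a₀) % q₀ = a₀ := by
        rw [add_comm, Int.add_mul_emod_self_left, Int.emod_eq_of_lt hp.2.1.1 hp.2.1.2]
      have m2 : (q₀ * s' + a₀') % q₀ = a₀' := by
        rw [add_comm, Int.add_mul_emod_self_left, Int.emod_eq_of_lt hp'.2.1.1 hp'.2.1.2]
      rw [← m1, ← m2, h]
    subst e1
    have e2 : s = s' := mul_left_cancel₀ hq₀.ne' (by linarith)
    subst e2; rfl

lemma upper_count (q₀ r N : ℤ) (hq₀ : 0 < q₀) (hrN : N / q₀ ≤ r)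
    (P : ℤ → ℤ → Prop) (Q : ℤ → Prop)
    (himp : ∀ a : ℤ, 0 ≤ a → a ≤ N → Q a → P (a / q₀) (a % q₀)) :
    {a : ℤ | 0 ≤ a ∧ a ≤ N ∧ Q a}.ncard
      ≤ ∑ s ∈ Finset.Icc (0:ℤ) r, {a₀ : ℤ | 0 ≤ a₀ ∧ a₀ < q₀ ∧ P s a₀}.ncard := by
  classical
  have hB : ∀ s : ℤ, {a₀ : ℤ | 0 ≤ a₀ ∧ a₀ < q₀ ∧ P s a₀}
      = ↑((Finset.Ico (0:ℤ) q₀).filter (fun a₀ => P s a₀)) := by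
    intro s; ext a₀
    simp [Finset.mem_filter, Finset.mem_Ico, and_assoc]
  have hA : {a : ℤ | 0 ≤ a ∧ a ≤ N ∧ Q a} = ↑((Finset.Icc (0:ℤ) N).filter Q) := by
    ext a; simp [Finset.mem_filter, Finset.mem_Icc, and_assoc]
  simp only [hB, hA, Set.ncard_coe_finset]
  rw [← Finset.card_sigma]
  apply Finset.card_le_card_of_injOn (fun a => ⟨a / q₀, a % q₀⟩)
  · intro a ha
    rw [Finset.mem_coe, Finset.mem_filter, Finset.mem_Icc] at ha
    obtain ⟨⟨ha0, haN⟩, hQ⟩ := ha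
    rw [Finset.mem_coe, Finset.mem_sigma, Finset.mem_Icc, Finset.mem_filter, Finset.mem_Ico]
    exact ⟨⟨Int.ediv_nonneg ha0 hq₀.le, le_trans (Int.ediv_le_ediv hq₀ haN) hrN⟩,
      ⟨Int.emod_nonneg a hq₀.ne', Int.emod_lt_of_pos a hq₀⟩, himp a ha0 haN hQ⟩
  · intro a ha b hb h
    have h1 := Int.mul_ediv_add_emod a q₀
    have h2 := Int.mul_ediv_add_emod b q₀
    have hd : a / q₀ = b / q₀ := congrArg Sigma.fst h
    have hm : a % q₀ = b % q₀ := by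
      have := (Sigma.mk.inj_iff.mp h).2
      exact heq_iff_eq.mp this
    rw [← hd, ← hm] at h2
    linarith

theorem A_sandwiched_by_B
    (f₁ f₁' f₁'' f₁''' f₂ f₂' f₂'' f₂''' : ℝ → ℝ)
    (hf₁ : ∀ x ∈ Icc (0:ℝ) 1, HasDerivWithinAt f₁ (f₁' x) (Icc (0:ℝ) 1) x)
    (hf₁' : ∀ x ∈ Icc (0:ℝ) 1, HasDerivWithinAt f₁' (f₁'' x) (Icc (0:ℝ) 1) x)
    (hf₁'' : ∀ x ∈ Icc (0:ℝ) 1, HasDerivWithinAt f₁'' (f₁''' x) (Icc (0:ℝ) 1) x)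
    (hf₁''' : ContinuousOn f₁''' (Icc (0:ℝ) 1))
    (hf₂ : ∀ x ∈ Icc (0:ℝ) 1, HasDerivWithinAt f₂ (f₂' x) (Icc (0:ℝ) 1) x)
    (hf₂' : ∀ x ∈ Icc (0:ℝ) 1, HasDerivWithinAt f₂' (f₂'' x) (Icc (0:ℝ) 1) x)
    (hf₂'' : ∀ x ∈ Icc (0:ℝ) 1, HasDerivWithinAt f₂'' (f₂''' x) (Icc (0:ℝ) 1) x)
    (hf₂''' : ContinuousOn f₂''' (Icc (0:ℝ) 1))
    (c₄ : ℝ)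
    (hc₄ : IsGreatest (insert 1
      ((fun x => max (max (max |f₁ x| |f₁' x|) (max |f₁'' x| |f₁''' x|))
        (max (max |f₂ x| |f₂' x|) (max |f₂'' x| |f₂''' x|))) '' Icc (0:ℝ) 1)) c₄)
    (q : ℕ) (hq : 1 ≤ q) (δ : ℝ) (hδ0 : 0 < δ) (hδhalf : δ < 1/2)
    (hδq : 2 * c₄ / q ≤ δ)
    (q₀ r : ℤ)
    (hq₀ : q₀ = ⌊Real.sqrt (δ * q / (2 * c₄))⌋)
    (hr : r = ⌊(q : ℝ) / (q₀ : ℝ)⌋) :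
    (∑ s ∈ Finset.Ico (0:ℤ) r,
      {a₀ : ℤ | 0 ≤ a₀ ∧ a₀ < q₀ ∧
        nint ((q : ℝ) * f₁ ((q₀ : ℝ) * s / q) + (a₀ : ℝ) * f₁' ((q₀ : ℝ) * s / q)) < δ/2 ∧
        nint ((q : ℝ) * f₂ ((q₀ : ℝ) * s / q) + (a₀ : ℝ) * f₂' ((q₀ : ℝ) * s / q)) < δ/2}.ncard)
      ≤ {a : ℤ | 0 ≤ a ∧ (a : ℝ) ≤ q ∧
          nint ((q : ℝ) * f₁ ((a : ℝ) / q)) < δ ∧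
          nint ((q : ℝ) * f₂ ((a : ℝ) / q)) < δ}.ncard
    ∧
    {a : ℤ | 0 ≤ a ∧ (a : ℝ) ≤ q ∧
        nint ((q : ℝ) * f₁ ((a : ℝ) / q)) < δ ∧
        nint ((q : ℝ) * f₂ ((a : ℝ) / q)) < δ}.ncard
      ≤ ∑ s ∈ Finset.Icc (0:ℤ) r,
        {a₀ : ℤ | 0 ≤ a₀ ∧ a₀ < q₀ ∧
          nint ((q : ℝ) * f₁ ((q₀ : ℝ) * s / q) + (a₀ : ℝ) * f₁' ((q₀ : ℝ) * s / q)) < 3*δ/2 ∧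
          nint ((q : ℝ) * f₂ ((q₀ : ℝ) * s / q) + (a₀ : ℝ) * f₂' ((q₀ : ℝ) * s / q)) < 3*δ/2}.ncard := by
  classical
  have hqR : (0:ℝ) < q := by exact_mod_cast hq
  have hc₄1 : (1:ℝ) ≤ c₄ := hc₄.2 (Set.mem_insert 1 _)
  have hc₄0 : (0:ℝ) < c₄ := lt_of_lt_of_le one_pos hc₄1
  have hbound₁ : ∀ x ∈ Icc (0:ℝ) 1, |f₁'' x| ≤ c₄ := fun x hx =>
    le_trans ((le_max_left _ _).trans ((le_max_right _ _).trans (le_max_left _ _)))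
      (hc₄.2 (Set.mem_insert_of_mem _ ⟨x, hx, rfl⟩))
  have hbound₂ : ∀ x ∈ Icc (0:ℝ) 1, |f₂'' x| ≤ c₄ := fun x hx =>
    le_trans ((le_max_left _ _).trans ((le_max_right _ _).trans (le_max_right _ _)))
      (hc₄.2 (Set.mem_insert_of_mem _ ⟨x, hx, rfl⟩))
  have harg : (1:ℝ) ≤ δ * q / (2 * c₄) := by
    rw [le_div_iff₀ (by positivity)]
    have h := (div_le_iff₀ hqR).mp hδq
    linarith
  have hq₀1 : (1:ℤ) ≤ q₀ := by
    rw [hq₀]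
    exact Int.le_floor.mpr (by simpa using Real.one_le_sqrt.mpr harg)
  have hq₀pos : (0:ℤ) < q₀ := hq₀1
  have hq₀R : (0:ℝ) < (q₀:ℝ) := by exact_mod_cast hq₀pos
  have hq₀sq : (q₀:ℝ)^2 ≤ δ * q / (2*c₄) := by
    have h1 : (q₀:ℝ) ≤ Real.sqrt (δ * q / (2 * c₄)) := hq₀ ▸ Int.floor_le _
    calc (q₀:ℝ)^2 ≤ (Real.sqrt (δ * q / (2 * c₄)))^2 := by
          exact pow_le_pow_left₀ hq₀R.le h1 2
      _ = δ * q / (2*c₄) := Real.sq_sqrt (by linarith)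
  have herr : c₄ * (q₀:ℝ)^2 / q ≤ δ / 2 := by
    rw [div_le_iff₀ hqR]
    have h1 := mul_le_mul_of_nonneg_left hq₀sq hc₄0.le
    have h2 : c₄ * (δ * q / (2*c₄)) = δ * q / 2 := by field_simp
    linarith
  have hrdiv : r = (q:ℤ) / q₀ := by
    rw [hr]
    have := floor_int_div (q:ℤ) q₀ hq₀pos
    simpa using this
  have hr0 : (0:ℤ) ≤ r := hrdiv ▸ Int.ediv_nonneg (by positivity) hq₀pos.le
  have hq₀r : q₀ * r ≤ (q:ℤ) := by
    rw [hrdiv]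
    have h1 := Int.mul_ediv_add_emod (q:ℤ) q₀
    have h2 := Int.emod_nonneg (q:ℤ) hq₀pos.ne'
    linarith
  -- key Taylor estimate
  have key : ∀ (g g' g'' : ℝ → ℝ),
      (∀ x ∈ Icc (0:ℝ) 1, HasDerivWithinAt g (g' x) (Icc (0:ℝ) 1) x) →
      (∀ x ∈ Icc (0:ℝ) 1, HasDerivWithinAt g' (g'' x) (Icc (0:ℝ) 1) x) →
      (∀ x ∈ Icc (0:ℝ) 1, |g'' x| ≤ c₄) →
      ∀ s a₀ : ℤ, 0 ≤ s → 0 ≤ a₀ → a₀ ≤ q₀ → q₀ * s + a₀ ≤ (q:ℤ) →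
      |(q:ℝ) * g (((q₀:ℝ) * s + a₀) / q)
        - ((q:ℝ) * g ((q₀:ℝ) * s / q) + (a₀:ℝ) * g' ((q₀:ℝ) * s / q))| ≤ δ / 2 := by
    intro g g' g'' hg hg' hgb s a₀ hs ha₀ ha₀q haq
    have hsR : (0:ℝ) ≤ s := by exact_mod_cast hs
    have ha₀R : (0:ℝ) ≤ a₀ := by exact_mod_cast ha₀
    have ha₀qR : (a₀:ℝ) ≤ q₀ := by exact_mod_cast ha₀q
    have haqR : (q₀:ℝ) * s + a₀ ≤ q := by exact_mod_cast haq
    set c : ℝ := (q₀:ℝ) * s / q with hcdef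
    set b : ℝ := ((q₀:ℝ) * s + a₀) / q with hbdef
    have hc0 : 0 ≤ c := div_nonneg (mul_nonneg hq₀R.le hsR) hqR.le
    have hcb : c ≤ b := by
      rw [hcdef, hbdef]
      gcongr
      linarith
    have hb1 : b ≤ 1 := by rw [hbdef, div_le_one hqR]; linarith
    have ht := taylor_bound hg hg' hgb hc0 hcb hb1
    have hbc : b - c = (a₀:ℝ) / q := by rw [hbdef, hcdef]; ring
    have heq : (q:ℝ) * g b - ((q:ℝ) * g c + (a₀:ℝ) * g' c)
        = (q:ℝ) * (g b - g c - (b - c) * g' c) := by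
      rw [hbc]; field_simp; ring
    rw [heq, abs_mul, abs_of_pos hqR]
    calc (q:ℝ) * |g b - g c - (b - c) * g' c|
        ≤ (q:ℝ) * (c₄ * (b - c)^2) := mul_le_mul_of_nonneg_left ht hqR.le
      _ = c₄ * (a₀:ℝ)^2 / q := by rw [hbc]; field_simp
      _ ≤ c₄ * (q₀:ℝ)^2 / q := by gcongr
      _ ≤ δ / 2 := herr
  have hAeq : {a : ℤ | 0 ≤ a ∧ (a : ℝ) ≤ q ∧
          nint ((q : ℝ) * f₁ ((a : ℝ) / q)) < δ ∧
          nint ((q : ℝ) * f₂ ((a : ℝ) / q)) < δ}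
      = {a : ℤ | 0 ≤ a ∧ a ≤ (q:ℤ) ∧
          (nint ((q : ℝ) * f₁ ((a : ℝ) / q)) < δ ∧
          nint ((q : ℝ) * f₂ ((a : ℝ) / q)) < δ)} := by
    ext a
    simp only [Set.mem_setOf_eq]
    constructor
    · rintro ⟨h1, h2, h3⟩; exact ⟨h1, by exact_mod_cast h2, h3⟩
    · rintro ⟨h1, h2, h3⟩; exact ⟨h1, by exact_mod_cast h2, h3⟩
  rw [hAeq]
  constructor
  · refine lower_count q₀ r (q:ℤ) hq₀pos hq₀r _ _ ?_
    intro s a₀ hs hsr ha₀ ha₀q hP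
    have h1 : q₀ * (s+1) ≤ q₀ * r := mul_le_mul_of_nonneg_left (by linarith) hq₀pos.le
    have h2 : q₀ * (s+1) = q₀ * s + q₀ := by ring
    have haq : q₀ * s + a₀ ≤ (q:ℤ) := by linarith
    have hcast : (((q₀ * s + a₀ : ℤ)):ℝ) = (q₀:ℝ) * s + (a₀:ℝ) := by push_cast; ring
    have hk₁ := key f₁ f₁' f₁'' hf₁ hf₁' hbound₁ s a₀ hs ha₀ ha₀q.le haq
    have hk₂ := key f₂ f₂' f₂'' hf₂ hf₂' hbound₂ s a₀ hs ha₀ ha₀q.le haq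
    have hl₁ := nint_lipschitz ((q:ℝ) * f₁ (((q₀:ℝ) * s + a₀) / q))
      ((q:ℝ) * f₁ ((q₀:ℝ) * s / q) + (a₀:ℝ) * f₁' ((q₀:ℝ) * s / q))
    have hl₂ := nint_lipschitz ((q:ℝ) * f₂ (((q₀:ℝ) * s + a₀) / q))
      ((q:ℝ) * f₂ ((q₀:ℝ) * s / q) + (a₀:ℝ) * f₂' ((q₀:ℝ) * s / q))
    rw [hcast]
    exact ⟨by linarith [hP.1], by linarith [hP.2]⟩
  · refine upper_count q₀ r (q:ℤ) hq₀pos (le_of_eq hrdiv.symm) _ _ ?_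
    intro a ha0 haN hQ
    have hd := Int.mul_ediv_add_emod a q₀
    have hs : (0:ℤ) ≤ a / q₀ := Int.ediv_nonneg ha0 hq₀pos.le
    have ha₀0 : (0:ℤ) ≤ a % q₀ := Int.emod_nonneg a hq₀pos.ne'
    have ha₀lt : a % q₀ < q₀ := Int.emod_lt_of_pos a hq₀pos
    have haq : q₀ * (a / q₀) + a % q₀ ≤ (q:ℤ) := by rw [hd]; exact haN
    have hcast : (q₀:ℝ) * ((a / q₀ : ℤ):ℝ) + ((a % q₀ : ℤ):ℝ) = (a:ℝ) := by
      exact_mod_cast congrArg (fun z : ℤ => (z:ℝ)) hd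
    have hk₁ := key f₁ f₁' f₁'' hf₁ hf₁' hbound₁ (a / q₀) (a % q₀) hs ha₀0 ha₀lt.le haq
    have hk₂ := key f₂ f₂' f₂'' hf₂ hf₂' hbound₂ (a / q₀) (a % q₀) hs ha₀0 ha₀lt.le haq
    rw [← hcast] at hQ
    have hl₁ := nint_lipschitz
      ((q:ℝ) * f₁ ((q₀:ℝ) * (a / q₀ : ℤ) / q) + ((a % q₀ : ℤ):ℝ) * f₁' ((q₀:ℝ) * (a / q₀ : ℤ) / q))
      ((q:ℝ) * f₁ (((q₀:ℝ) * (a / q₀ : ℤ) + ((a % q₀ : ℤ):ℝ)) / q))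
    have hl₂ := nint_lipschitz
      ((q:ℝ) * f₂ ((q₀:ℝ) * (a / q₀ : ℤ) / q) + ((a % q₀ : ℤ):ℝ) * f₂' ((q₀:ℝ) * (a / q₀ : ℤ) / q))
      ((q:ℝ) * f₂ (((q₀:ℝ) * (a / q₀ : ℤ) + ((a % q₀ : ℤ):ℝ)) / q))
    rw [abs_sub_comm] at hl₁ hl₂
    exact ⟨by linarith [hQ.1], by linarith [hQ.2]⟩
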